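/- Let A be a coquasitriangular bialgebra over a field k, with coquasitriangular form r and convolution inverse r'. Let g ∈ A be a group-like element (Δ(g) = g ⊗ g and ε(g) = 1). Define the k-linear map 𝔍_g : A → A by 𝔍_g(a) = Σ r(a_(1), g) a_(2) r'(a_(3), g). Then 𝔍_g is a bijective k-linear map which is both a k-algebra homomorphism and a k-coalgebra homomorphism (i.e., a bialgebra automorphism of A), and g a = 𝔍_g(a) g for all a ∈ A. -/

import Mathlib

open scoped TensorProduct

/-- The December 2024 `Coalgebra.Repr` (index type `ι` as an implicit field), whose name
Mathlib now uses for a structure taking `ι` as a parameter. -/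
structure Coalgebra.ReprOld (R : Type*) {A : Type*}
    [CommSemiring R] [AddCommMonoid A] [Module R A] [CoalgebraStruct R A] (a : A) where
  {ι : Type*}
  (index : Finset ι)
  (left : ι → A)
  (right : ι → A)
  (eq : ∑ i ∈ index, left i ⊗ₜ[R] right i = CoalgebraStruct.comul a)

section HayashiAux

universe u

variable {k : Type*} [CommRing k] {A : Type*} [Ring A] [Bialgebra k A]

noncomputable def reprArb (k : Type*) [CommRing k] {A : Type*} [Ring A] [Bialgebra k A]
    (a : A) : Coalgebra.ReprOld k a where
  index := (Coalgebra.Repr.arbitrary k a).index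
  left := (Coalgebra.Repr.arbitrary k a).left
  right := (Coalgebra.Repr.arbitrary k a).right
  eq := (Coalgebra.Repr.arbitrary k a).eq
notation "ℛ" => reprArb
noncomputable def Lm (f : A →ₗ[k] k) : A →ₗ[k] A :=
  (TensorProduct.lid k A).toLinearMap ∘ₗ f.rTensor A ∘ₗ Coalgebra.comul
noncomputable def Rm (f : A →ₗ[k] k) : A →ₗ[k] A :=
  (TensorProduct.rid k A).toLinearMap ∘ₗ f.lTensor A ∘ₗ Coalgebra.comul
noncomputable def cv (f f' : A →ₗ[k] k) : A →ₗ[k] k :=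
  LinearMap.mul' k k ∘ₗ TensorProduct.map f f' ∘ₗ Coalgebra.comul
lemma Lm_apply (f : A →ₗ[k] k) {a : A} (ra : Coalgebra.ReprOld k a) :
    Lm f a = ∑ i ∈ ra.index, f (ra.left i) • ra.right i := by
  simp only [Lm, LinearMap.comp_apply, ← ra.eq, map_sum, LinearMap.rTensor_tmul,
    LinearEquiv.coe_coe, TensorProduct.lid_tmul]
lemma Rm_apply (f : A →ₗ[k] k) {a : A} (ra : Coalgebra.ReprOld k a) :
    Rm f a = ∑ i ∈ ra.index, f (ra.right i) • ra.left i := by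
  simp only [Rm, LinearMap.comp_apply, ← ra.eq, map_sum, LinearMap.lTensor_tmul,
    LinearEquiv.coe_coe, TensorProduct.rid_tmul]
lemma cv_apply (f f' : A →ₗ[k] k) {a : A} (ra : Coalgebra.ReprOld k a) :
    cv f f' a = ∑ i ∈ ra.index, f (ra.left i) * f' (ra.right i) := by
  simp only [cv, LinearMap.comp_apply, ← ra.eq, map_sum, TensorProduct.map_tmul,
    LinearMap.mul'_apply]
lemma Lm_apply' (f : A →ₗ[k] k) (a : A) :
    Lm f a = ∑ i ∈ (ℛ k a).index, f ((ℛ k a).left i) • (ℛ k a).right i :=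
  Lm_apply f (ℛ k a)
lemma Rm_apply' (f : A →ₗ[k] k) (a : A) :
    Rm f a = ∑ i ∈ (ℛ k a).index, f ((ℛ k a).right i) • (ℛ k a).left i :=
  Rm_apply f (ℛ k a)
lemma cv_apply' (f f' : A →ₗ[k] k) (a : A) :
    cv f f' a = ∑ i ∈ (ℛ k a).index, f ((ℛ k a).left i) * f' ((ℛ k a).right i) :=
  cv_apply f f' (ℛ k a)
lemma comul_repr (x : A) :
    Coalgebra.comul (R := k) x
      = ∑ i ∈ (ℛ k x).index, (ℛ k x).left i ⊗ₜ[k] (ℛ k x).right i :=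
  ((ℛ k x).eq).symm
lemma assoc_sums {M : Type*} [AddCommMonoid M] [Module k M]
    (U : A ⊗[k] (A ⊗[k] A) →ₗ[k] M) {a : A} (ra : Coalgebra.ReprOld k a)
    (rL : ∀ i : ra.ι, Coalgebra.ReprOld k (ra.left i))
    (rR : ∀ i : ra.ι, Coalgebra.ReprOld k (ra.right i)) :
    ∑ i ∈ ra.index, ∑ j ∈ (rL i).index,
        U ((rL i).left j ⊗ₜ[k] ((rL i).right j ⊗ₜ[k] ra.right i))
      = ∑ i ∈ ra.index, ∑ j ∈ (rR i).index,
        U (ra.left i ⊗ₜ[k] ((rR i).left j ⊗ₜ[k] (rR i).right j)) := by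
  have h := congrArg U (Coalgebra.sum_tmul_tmul_eq
    (⟨ra.index, ra.left, ra.right, ra.eq⟩ : Coalgebra.Repr k a ra.ι)
    (fun i => ⟨(rL i).index, (rL i).left, (rL i).right, (rL i).eq⟩)
    (fun i => ⟨(rR i).index, (rR i).left, (rR i).right, (rR i).eq⟩))
  simpa only [map_sum] using h
lemma Lm_comp (f f' : A →ₗ[k] k) : Lm f ∘ₗ Lm f' = Lm (cv f' f) := by
  ext a
  have key := assoc_sums (U := (TensorProduct.lid k A).toLinearMap ∘ₗ
      TensorProduct.map f' ((TensorProduct.lid k A).toLinearMap ∘ₗ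
        TensorProduct.map f LinearMap.id))
    (ℛ k a) (fun i => ℛ k ((ℛ k a).left i)) (fun i => ℛ k ((ℛ k a).right i))
  simp only [LinearMap.comp_apply, TensorProduct.map_tmul, LinearEquiv.coe_coe,
    TensorProduct.lid_tmul, LinearMap.id_coe, id_eq, smul_smul, mul_comm, mul_left_comm] at key
  simp only [LinearMap.comp_apply, Lm_apply', cv_apply', map_sum, map_smul,
    Finset.smul_sum, Finset.sum_smul, smul_smul, mul_comm, mul_left_comm]
  exact key.symm
lemma Rm_comp (f f' : A →ₗ[k] k) : Rm f ∘ₗ Rm f' = Rm (cv f f') := by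
  ext a
  have key := assoc_sums (U := (TensorProduct.rid k A).toLinearMap ∘ₗ
      TensorProduct.map LinearMap.id (LinearMap.mul' k k ∘ₗ TensorProduct.map f f'))
    (ℛ k a) (fun i => ℛ k ((ℛ k a).left i)) (fun i => ℛ k ((ℛ k a).right i))
  simp only [LinearMap.comp_apply, TensorProduct.map_tmul, LinearEquiv.coe_coe,
    TensorProduct.rid_tmul, LinearMap.id_coe, id_eq, LinearMap.mul'_apply,
    smul_smul, mul_comm, mul_left_comm] at key
  simp only [LinearMap.comp_apply, Rm_apply', cv_apply', map_sum, map_smul,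
    Finset.smul_sum, Finset.sum_smul, smul_smul, mul_comm, mul_left_comm]
  exact key
lemma Lm_Rm_comm (f h : A →ₗ[k] k) : Lm f ∘ₗ Rm h = Rm h ∘ₗ Lm f := by
  ext a
  have key := assoc_sums (U := (TensorProduct.lid k A).toLinearMap ∘ₗ
      TensorProduct.map f ((TensorProduct.rid k A).toLinearMap ∘ₗ
        TensorProduct.map LinearMap.id h))
    (ℛ k a) (fun i => ℛ k ((ℛ k a).left i)) (fun i => ℛ k ((ℛ k a).right i))
  simp only [LinearMap.comp_apply, TensorProduct.map_tmul, LinearEquiv.coe_coe,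
    TensorProduct.lid_tmul, TensorProduct.rid_tmul, LinearMap.id_coe, id_eq,
    smul_smul, mul_comm, mul_left_comm] at key
  simp only [LinearMap.comp_apply, Lm_apply', Rm_apply', map_sum, map_smul,
    Finset.smul_sum, Finset.sum_smul, smul_smul, mul_comm, mul_left_comm]
  exact key
lemma Lm_counit : Lm (Coalgebra.counit : A →ₗ[k] k) = LinearMap.id := by
  ext a
  simp [Lm]
lemma Rm_counit : Rm (Coalgebra.counit : A →ₗ[k] k) = LinearMap.id := by
  ext a
  simp [Rm]
lemma comul_Lm (f : A →ₗ[k] k) :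
    Coalgebra.comul ∘ₗ Lm f = (Lm f).rTensor A ∘ₗ Coalgebra.comul (R := k) := by
  ext a
  have key := assoc_sums (U := (TensorProduct.lid k (A ⊗[k] A)).toLinearMap ∘ₗ
      TensorProduct.map f LinearMap.id)
    (ℛ k a) (fun i => ℛ k ((ℛ k a).left i)) (fun i => ℛ k ((ℛ k a).right i))
  simp only [LinearMap.comp_apply, TensorProduct.map_tmul, LinearEquiv.coe_coe,
    TensorProduct.lid_tmul, LinearMap.id_coe, id_eq] at key
  rw [LinearMap.comp_apply, LinearMap.comp_apply, Lm_apply' f a, map_sum, comul_repr a,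
    map_sum]
  simp only [map_smul, comul_repr, LinearMap.rTensor_tmul, Lm_apply',
    TensorProduct.sum_tmul, TensorProduct.smul_tmul', Finset.smul_sum]
  exact key.symm
lemma comul_Rm (h : A →ₗ[k] k) :
    Coalgebra.comul ∘ₗ Rm h = (Rm h).lTensor A ∘ₗ Coalgebra.comul (R := k) := by
  ext a
  have key := assoc_sums (U := (TensorProduct.rid k (A ⊗[k] A)).toLinearMap ∘ₗ
      TensorProduct.map LinearMap.id h ∘ₗ (TensorProduct.assoc k A A A).symm.toLinearMap)
    (ℛ k a) (fun i => ℛ k ((ℛ k a).left i)) (fun i => ℛ k ((ℛ k a).right i))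
  simp only [LinearMap.comp_apply, LinearEquiv.coe_coe, TensorProduct.assoc_symm_tmul,
    TensorProduct.map_tmul, TensorProduct.rid_tmul, LinearMap.id_coe, id_eq] at key
  rw [LinearMap.comp_apply, LinearMap.comp_apply, Rm_apply' h a, map_sum, comul_repr a,
    map_sum]
  simp only [map_smul, comul_repr, LinearMap.lTensor_tmul, Rm_apply',
    TensorProduct.tmul_sum, TensorProduct.tmul_smul, Finset.smul_sum]
  exact key
lemma lTensor_Lm (f : A →ₗ[k] k) :
    (Lm f).lTensor A ∘ₗ Coalgebra.comul (R := k)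
      = (Rm f).rTensor A ∘ₗ Coalgebra.comul (R := k) := by
  ext a
  have key := assoc_sums (U := TensorProduct.map LinearMap.id
      ((TensorProduct.lid k A).toLinearMap ∘ₗ TensorProduct.map f LinearMap.id))
    (ℛ k a) (fun i => ℛ k ((ℛ k a).left i)) (fun i => ℛ k ((ℛ k a).right i))
  simp only [LinearMap.comp_apply, TensorProduct.map_tmul, LinearEquiv.coe_coe,
    TensorProduct.lid_tmul, LinearMap.id_coe, id_eq, TensorProduct.tmul_smul] at key
  rw [LinearMap.comp_apply, LinearMap.comp_apply, comul_repr a, map_sum, map_sum]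
  simp only [LinearMap.lTensor_tmul, LinearMap.rTensor_tmul, Lm_apply', Rm_apply',
    TensorProduct.tmul_sum, TensorProduct.sum_tmul, TensorProduct.tmul_smul,
    TensorProduct.smul_tmul', Finset.smul_sum]
  exact key.symm
lemma sum_counit_smul (x : A) :
    ∑ i ∈ (ℛ k x).index,
      Coalgebra.counit (R := k) ((ℛ k x).left i) • (ℛ k x).right i = x := by
  have h := Lm_apply' (Coalgebra.counit : A →ₗ[k] k) x
  rw [Lm_counit, LinearMap.id_apply] at h
  exact h.symm
lemma counit_Rm (h : A →ₗ[k] k) : Coalgebra.counit ∘ₗ Rm h = h := by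
  ext x
  rw [LinearMap.comp_apply, Rm_apply' h x, map_sum]
  conv_rhs => rw [← sum_counit_smul (k := k) x]
  rw [map_sum]
  simp only [map_smul, smul_eq_mul]
  exact Finset.sum_congr rfl fun i _ => mul_comm _ _
lemma comp_Lm (f h : A →ₗ[k] k) : f ∘ₗ Lm h = cv h f := by
  ext x
  rw [LinearMap.comp_apply, Lm_apply' h x, map_sum, cv_apply' h f x]
  simp only [map_smul, smul_eq_mul]
/-- a representation with index type in an arbitrary universe. -/
noncomputable def uliftRepr {a : A} (ra : Coalgebra.ReprOld k a) : Coalgebra.ReprOld k a where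
  ι := ULift.{u} (Fin ra.index.card)
  index := Finset.univ
  left i := ra.left (ra.index.equivFin.symm i.down)
  right i := ra.right (ra.index.equivFin.symm i.down)
  eq := by
    rw [← ra.eq, ← Finset.sum_coe_sort ra.index (fun i => ra.left i ⊗ₜ[k] ra.right i)]
    exact Fintype.sum_equiv (Equiv.ulift.trans ra.index.equivFin.symm) _ _ fun i => rfl

lemma sum_uliftRepr {M : Type*} [AddCommMonoid M] {a : A} (ra : Coalgebra.ReprOld k a)
    (F : A → A → M) :
    ∑ i ∈ (uliftRepr.{u} ra).index, F ((uliftRepr.{u} ra).left i) ((uliftRepr.{u} ra).right i)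
      = ∑ i ∈ ra.index, F (ra.left i) (ra.right i) := by
  rw [← Finset.sum_coe_sort ra.index (fun i => F (ra.left i) (ra.right i))]
  exact Fintype.sum_equiv (Equiv.ulift.trans ra.index.equivFin.symm) _ _ fun i => rfl

noncomputable def singleRepr {x : A} (h : Coalgebra.comul (R := k) x = x ⊗ₜ[k] x) :
    Coalgebra.ReprOld k x where
  ι := PUnit
  index := {PUnit.unit}
  left _ := x
  right _ := x
  eq := by simp [h]
noncomputable def oneRepr : Coalgebra.ReprOld k (1 : A) :=
  singleRepr (by rw [Bialgebra.comul_one, Algebra.TensorProduct.one_def])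
noncomputable def mulRepr {a b : A} (ra : Coalgebra.ReprOld k a) (rb : Coalgebra.ReprOld k b) :
    Coalgebra.ReprOld k (a * b) where
  ι := ra.ι × rb.ι
  index := ra.index ×ˢ rb.index
  left p := ra.left p.1 * rb.left p.2
  right p := ra.right p.1 * rb.right p.2
  eq := by
    rw [Bialgebra.comul_mul (R := k) a b, ← ra.eq, ← rb.eq, Finset.sum_mul_sum]
    rw [Finset.sum_product]
    simp [Algebra.TensorProduct.tmul_mul_tmul]
lemma Lm_mul {f : A →ₗ[k] k} (hf : ∀ x y : A, f (x * y) = f x * f y) (a b : A) :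
    Lm f (a * b) = Lm f a * Lm f b := by
  rw [Lm_apply f (mulRepr (ℛ k a) (ℛ k b)), Lm_apply' f a, Lm_apply' f b,
    Finset.sum_mul_sum]
  show ∑ p ∈ (ℛ k a).index ×ˢ (ℛ k b).index, _ = _
  rw [Finset.sum_product]
  simp only [mulRepr, hf, smul_mul_assoc, mul_smul_comm, smul_smul]
  exact Finset.sum_congr rfl fun i _ => Finset.sum_congr rfl fun j _ => by rw [mul_comm]
lemma Rm_mul {f : A →ₗ[k] k} (hf : ∀ x y : A, f (x * y) = f x * f y) (a b : A) :
    Rm f (a * b) = Rm f a * Rm f b := by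
  rw [Rm_apply f (mulRepr (ℛ k a) (ℛ k b)), Rm_apply' f a, Rm_apply' f b,
    Finset.sum_mul_sum]
  show ∑ p ∈ (ℛ k a).index ×ˢ (ℛ k b).index, _ = _
  rw [Finset.sum_product]
  simp only [mulRepr, hf, smul_mul_assoc, mul_smul_comm, smul_smul]
  exact Finset.sum_congr rfl fun i _ => Finset.sum_congr rfl fun j _ => by rw [mul_comm]
lemma Lm_one (f : A →ₗ[k] k) : Lm f (1 : A) = f 1 • 1 := by
  rw [Lm_apply f (oneRepr.{_, _, 0} (k := k) (A := A))]
  simp [oneRepr, singleRepr]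
lemma Rm_one (f : A →ₗ[k] k) : Rm f (1 : A) = f 1 • 1 := by
  rw [Rm_apply f (oneRepr.{_, _, 0} (k := k) (A := A))]
  simp [oneRepr, singleRepr]
end HayashiAux

/-- **Hayashi's lemma.**  Let `A` be a coquasitriangular bialgebra over a field `k`,
with coquasitriangular form `r` and convolution inverse `r'` (axioms stated via
arbitrary Sweedler representations `Coalgebra.Repr`).  Let `g` be group-like and let
`J : A → A` be the linear map `J a = ∑ r(a₍₁₎, g) a₍₂₎ r'(a₍₃₎, g)`.  Then `J` is a
bijective algebra and coalgebra endomorphism of `A` (i.e. a bialgebra automorphism),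
and `g * a = J a * g` for all `a`. -/
theorem hayashi_conjugation_automorphism
    {k : Type*} [Field k] {A : Type*} [Ring A] [Bialgebra k A]
    (r r' : A →ₗ[k] A →ₗ[k] k)
    (hinv₁ : ∀ (a b : A) (ra : Coalgebra.ReprOld k a) (rb : Coalgebra.ReprOld k b),
      ∑ i ∈ ra.index, ∑ j ∈ rb.index,
          r (ra.left i) (rb.left j) * r' (ra.right i) (rb.right j) =
        Coalgebra.counit (R := k) a * Coalgebra.counit (R := k) b)
    (hinv₂ : ∀ (a b : A) (ra : Coalgebra.ReprOld k a) (rb : Coalgebra.ReprOld k b),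
      ∑ i ∈ ra.index, ∑ j ∈ rb.index,
          r' (ra.left i) (rb.left j) * r (ra.right i) (rb.right j) =
        Coalgebra.counit (R := k) a * Coalgebra.counit (R := k) b)
    (hCQT1 : ∀ (a b c : A) (rc : Coalgebra.ReprOld k c),
      r (a * b) c = ∑ i ∈ rc.index, r a (rc.left i) * r b (rc.right i))
    (hCQT2 : ∀ (a b c : A) (ra : Coalgebra.ReprOld k a),
      r a (b * c) = ∑ i ∈ ra.index, r (ra.right i) b * r (ra.left i) c)
    (hCQT3 : ∀ (a b : A) (ra : Coalgebra.ReprOld k a) (rb : Coalgebra.ReprOld k b),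
      ∑ i ∈ ra.index, ∑ j ∈ rb.index,
          r (ra.left i) (rb.left j) • (ra.right i * rb.right j) =
        ∑ i ∈ ra.index, ∑ j ∈ rb.index,
          r (ra.right i) (rb.right j) • (rb.left j * ra.left i))
    (g : A) (hg : Coalgebra.comul (R := k) g = g ⊗ₜ[k] g)
    (hgε : Coalgebra.counit (R := k) g = 1)
    (J : A →ₗ[k] A)
    (hJ : ∀ (a : A) (ra : Coalgebra.ReprOld k a)
        (rr : ∀ i : ra.ι, Coalgebra.ReprOld k (ra.right i)),
      J a = ∑ i ∈ ra.index, ∑ j ∈ (rr i).index,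
        (r (ra.left i) g * r' ((rr i).right j) g) • (rr i).left j) :
    Function.Bijective J ∧
      (∀ a b : A, J (a * b) = J a * J b) ∧ J 1 = 1 ∧
      (∀ a : A, Coalgebra.comul (R := k) (J a) =
        TensorProduct.map J J (Coalgebra.comul (R := k) a)) ∧
      (∀ a : A, Coalgebra.counit (R := k) (J a) = Coalgebra.counit (R := k) a) ∧
      (∀ a : A, g * a = J a * g) := by
  classical
  set φ : A →ₗ[k] k := r.flip g with hφdef
  set φ' : A →ₗ[k] k := r'.flip g with hφ'def
  -- the convolution identities for the functionals φ, φ'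
  have hcv1 : cv φ φ' = (Coalgebra.counit : A →ₗ[k] k) := by
    ext a
    have h := hinv₁ a g (uliftRepr (ℛ k a)) (singleRepr hg)
    rw [sum_uliftRepr (ℛ k a) (fun x y => ∑ j ∈ (singleRepr hg).index,
      r x ((singleRepr hg).left j) * r' y ((singleRepr hg).right j))] at h
    simp only [singleRepr, Finset.sum_singleton, hgε, mul_one] at h
    rw [cv_apply' φ φ' a]
    simpa [hφdef, hφ'def] using h
  have hcv2 : cv φ' φ = (Coalgebra.counit : A →ₗ[k] k) := by
    ext a
    have h := hinv₂ a g (uliftRepr (ℛ k a)) (singleRepr hg)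
    rw [sum_uliftRepr (ℛ k a) (fun x y => ∑ j ∈ (singleRepr hg).index,
      r' x ((singleRepr hg).left j) * r y ((singleRepr hg).right j))] at h
    simp only [singleRepr, Finset.sum_singleton, hgε, mul_one] at h
    rw [cv_apply' φ' φ a]
    simpa [hφdef, hφ'def] using h
  -- φ is multiplicative
  have hφmul : ∀ x y : A, φ (x * y) = φ x * φ y := by
    intro x y
    have h := hCQT1 x y g (singleRepr hg)
    simp only [singleRepr, Finset.sum_singleton] at h
    simpa [hφdef] using h
  -- normalization at 1
  have hφφ'1 : φ 1 * φ' 1 = 1 := by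
    have h := hinv₁ 1 g (oneRepr) (singleRepr hg)
    simp only [oneRepr, singleRepr, Finset.sum_singleton] at h
    simpa [hφdef, hφ'def, hgε] using h
  have hφ1 : φ 1 = 1 := by
    have h2 : φ 1 = φ 1 * φ 1 := by simpa using hφmul 1 1
    calc φ 1 = φ 1 * (φ 1 * φ' 1) := by rw [hφφ'1, mul_one]
      _ = (φ 1 * φ 1) * φ' 1 := by ring
      _ = φ 1 * φ' 1 := by rw [← h2]
      _ = 1 := hφφ'1
  have hφ'1 : φ' 1 = 1 := by
    have h := hφφ'1
    rwa [hφ1, one_mul] at h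
  -- the map J is conjugation: J = Rm φ' ∘ Lm φ
  have hJ2 : ∀ x : A, J x = Rm φ' (Lm φ x) := by
    intro a
    have h := hJ a (uliftRepr (ℛ k a))
      (fun i => uliftRepr (ℛ k ((uliftRepr (ℛ k a)).right i)))
    rw [sum_uliftRepr (ℛ k a) (fun x y => ∑ j ∈ (uliftRepr (ℛ k y)).index,
      (r x g * r' ((uliftRepr (ℛ k y)).right j) g) • (uliftRepr (ℛ k y)).left j)] at h
    rw [h, Lm_apply' φ a, map_sum]
    refine Finset.sum_congr rfl fun i _ => ?_
    rw [sum_uliftRepr (ℛ k ((ℛ k a).right i))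
      (fun x y => (r ((ℛ k a).left i) g * r' y g) • x)]
    rw [map_smul, Rm_apply' φ' ((ℛ k a).right i), Finset.smul_sum]
    refine Finset.sum_congr rfl fun j _ => ?_
    rw [smul_smul]
    simp [hφdef, hφ'def]
  have hJcomp : J = Rm φ' ∘ₗ Lm φ := LinearMap.ext hJ2
  -- composition identities
  have hc12 : Lm φ' ∘ₗ Lm φ = LinearMap.id := by rw [Lm_comp, hcv1, Lm_counit]
  have hc21 : Lm φ ∘ₗ Lm φ' = LinearMap.id := by rw [Lm_comp, hcv2, Lm_counit]
  have hr12 : Rm φ ∘ₗ Rm φ' = LinearMap.id := by rw [Rm_comp, hcv1, Rm_counit]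
  have hr21 : Rm φ' ∘ₗ Rm φ = LinearMap.id := by rw [Rm_comp, hcv2, Rm_counit]
  have hLLp : ∀ x : A, Lm φ' (Lm φ x) = x := fun x => by
    simpa using LinearMap.congr_fun hc12 x
  have hLL'p : ∀ x : A, Lm φ (Lm φ' x) = x := fun x => by
    simpa using LinearMap.congr_fun hc21 x
  have hRRp : ∀ x : A, Rm φ (Rm φ' x) = x := fun x => by
    simpa using LinearMap.congr_fun hr12 x
  have hRR'p : ∀ x : A, Rm φ' (Rm φ x) = x := fun x => by
    simpa using LinearMap.congr_fun hr21 x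
  have hcomm : ∀ (f h : A →ₗ[k] k) (x : A), Lm f (Rm h x) = Rm h (Lm f x) :=
    fun f h x => by simpa using LinearMap.congr_fun (Lm_Rm_comm f h) x
  -- bijectivity
  have hKJ : ∀ x : A, Rm φ (Lm φ' (J x)) = x := by
    intro x
    rw [hJ2 x, hcomm φ' φ', hLLp x]
    exact hRRp x
  have hJK : ∀ x : A, J (Rm φ (Lm φ' x)) = x := by
    intro x
    rw [hJ2, hcomm φ φ, hLL'p x]
    exact hRR'p x
  have hbij : Function.Bijective J :=
    Function.bijective_iff_has_inverse.mpr ⟨fun x => Rm φ (Lm φ' x), hKJ, hJK⟩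
  -- multiplicativity
  have hRφ'mul : ∀ x y : A, Rm φ' (x * y) = Rm φ' x * Rm φ' y := by
    intro x y
    conv_lhs => rw [← hRRp x, ← hRRp y]
    rw [← Rm_mul hφmul, hRR'p]
  have hJmul : ∀ a b : A, J (a * b) = J a * J b := by
    intro a b
    rw [hJ2, hJ2, hJ2, Lm_mul hφmul, hRφ'mul]
  have hJ1 : J 1 = 1 := by
    rw [hJ2, Lm_one, hφ1, one_smul, Rm_one, hφ'1, one_smul]
  -- counit is preserved
  have hcounit : ∀ a : A, Coalgebra.counit (R := k) (J a) = Coalgebra.counit (R := k) a := by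
    intro a
    rw [hJ2]
    have h1 : Coalgebra.counit (R := k) (Rm φ' (Lm φ a)) = φ' (Lm φ a) := by
      simpa using LinearMap.congr_fun (counit_Rm φ') (Lm φ a)
    have h2 : φ' (Lm φ a) = cv φ φ' a := by
      simpa using LinearMap.congr_fun (comp_Lm φ' φ) a
    rw [h1, h2, hcv1]
  -- comultiplication is preserved
  have c1p : ∀ x : A, Coalgebra.comul (R := k) (Rm φ' x)
      = (Rm φ').lTensor A (Coalgebra.comul (R := k) x) := fun x => by
    simpa using LinearMap.congr_fun (comul_Rm φ') x
  have c2p : ∀ x : A, Coalgebra.comul (R := k) (Lm φ x)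
      = (Lm φ).rTensor A (Coalgebra.comul (R := k) x) := fun x => by
    simpa using LinearMap.congr_fun (comul_Lm φ) x
  have lTLm_p : ∀ x : A, (Lm φ).lTensor A (Coalgebra.comul (R := k) x)
      = (Rm φ).rTensor A (Coalgebra.comul (R := k) x) := fun x => by
    simpa using LinearMap.congr_fun (lTensor_Lm φ) x
  have swap : ∀ w : A ⊗[k] A,
      (Lm φ).lTensor A ((Rm φ').rTensor A w) = (Rm φ').rTensor A ((Lm φ).lTensor A w) := by
    intro w
    have h1 := LinearMap.congr_fun (LinearMap.lTensor_comp_rTensor A (Rm φ') (Lm φ)) w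
    have h2 := LinearMap.congr_fun (LinearMap.rTensor_comp_lTensor A (Rm φ') (Lm φ)) w
    simp only [LinearMap.comp_apply] at h1 h2
    rw [h1, h2]
  have collapse : ∀ v : A ⊗[k] A, (Rm φ').rTensor A ((Rm φ).rTensor A v) = v := by
    intro v
    rw [← LinearMap.comp_apply, ← LinearMap.rTensor_comp, hr21, LinearMap.rTensor_id,
      LinearMap.id_apply]
  have hcomul : ∀ a : A, Coalgebra.comul (R := k) (J a)
      = TensorProduct.map J J (Coalgebra.comul (R := k) a) := by
    intro a
    have r1 : TensorProduct.map J J (Coalgebra.comul (R := k) a)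
        = J.lTensor A (J.rTensor A (Coalgebra.comul (R := k) a)) :=
      (LinearMap.congr_fun (LinearMap.lTensor_comp_rTensor A J J) _).symm
    have r2 : J.rTensor A (Coalgebra.comul (R := k) a)
        = (Rm φ').rTensor A ((Lm φ).rTensor A (Coalgebra.comul (R := k) a)) := by
      rw [hJcomp, LinearMap.rTensor_comp]; rfl
    have r3 : ∀ x : A ⊗[k] A, J.lTensor A x = (Rm φ').lTensor A ((Lm φ).lTensor A x) := by
      intro x
      rw [hJcomp, LinearMap.lTensor_comp]; rfl
    have goal2 : (Lm φ).lTensor A ((Rm φ').rTensor A ((Lm φ).rTensor A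
          (Coalgebra.comul (R := k) a)))
        = (Lm φ).rTensor A (Coalgebra.comul (R := k) a) := by
      rw [← c2p a, swap, lTLm_p, collapse]
    rw [hJ2 a, c1p, c2p, r1, r2, r3, goal2]
  -- the commutation relation `g * a = J a * g`
  have hstar : ∀ x : A, Lm φ x * g = g * Rm φ x := by
    intro x
    have h := hCQT3 x g (uliftRepr (ℛ k x)) (singleRepr hg)
    rw [sum_uliftRepr (ℛ k x) (fun x1 x2 => ∑ j ∈ (singleRepr hg).index,
        r x1 ((singleRepr hg).left j) • (x2 * (singleRepr hg).right j)),
      sum_uliftRepr (ℛ k x) (fun x1 x2 => ∑ j ∈ (singleRepr hg).index,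
        r x2 ((singleRepr hg).right j) • ((singleRepr hg).left j * x1))] at h
    simp only [singleRepr, Finset.sum_singleton] at h
    rw [Lm_apply' φ x, Finset.sum_mul, Rm_apply' φ x, Finset.mul_sum]
    simp only [smul_mul_assoc, mul_smul_comm]
    simpa [hφdef] using h
  have hga : ∀ a : A, g * a = J a * g := by
    intro a
    conv_lhs => rw [← hRRp a]
    rw [← hstar (Rm φ' a), hcomm φ φ' a, ← hJ2 a]
  exact ⟨hbij, hJmul, hJ1, hcomul, hcounit, hga⟩
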